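/- Let A be a Banach algebra and D : A → A* a surjective bounded derivation such that the second adjoint D'' : A** → A*** is a derivation (with respect to the first Arens product). Then A*** A** ⊆ A*, and consequently A* has the weak*-weak convergence property with respect to A: for every x' ∈ A* and every net (a_α) in A converging weak* to a'' ∈ A**, the nets x' a_α and a_α x' converge weakly in A* to x' a'' and a'' x' respectively. -/

import Mathlib

namespace NormedSpace

/-- The topological dual of a normed space `E` (Mathlib's former `NormedSpace.Dual`). -/
abbrev Dual (𝕜 : Type*) [NontriviallyNormedField 𝕜] (E : Type*) [SeminormedAddCommGroup E]
    [NormedSpace 𝕜 E] : Type _ :=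
  E →L[𝕜] 𝕜

end NormedSpace

open ContinuousLinearMap NormedSpace Filter Topology Metric

noncomputable section

namespace Arens

section Bilinear

variable {X Y Z : Type*} [NormedAddCommGroup X] [NormedSpace ℂ X]
  [NormedAddCommGroup Y] [NormedSpace ℂ Y] [NormedAddCommGroup Z] [NormedSpace ℂ Z]

/-- The Arens adjoint `m*` of a bounded bilinear map `m : X × Y → Z`,
`⟨m*(z',x), y⟩ = ⟨z', m(x,y)⟩`. -/
def adj (f : X →L[ℂ] Y →L[ℂ] Z) : Dual ℂ Z →L[ℂ] X →L[ℂ] Dual ℂ Y :=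
  ((ContinuousLinearMap.compL ℂ X (Y →L[ℂ] Z) (Y →L[ℂ] ℂ)).flip f).comp
    (ContinuousLinearMap.compL ℂ Y Z ℂ)

@[simp] lemma adj_apply (f : X →L[ℂ] Y →L[ℂ] Z) (z' : Dual ℂ Z) (x : X) (y : Y) :
    adj f z' x y = z' (f x y) := rfl

/-- The Arens triple-adjoint extension `m*** : X** × Y** → Z**` of a bounded
bilinear map `m : X × Y → Z`. -/
def ext3 (f : X →L[ℂ] Y →L[ℂ] Z) :
    Dual ℂ (Dual ℂ X) →L[ℂ] Dual ℂ (Dual ℂ Y) →L[ℂ] Dual ℂ (Dual ℂ Z) :=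
  adj (adj (adj f))

/-- Weak-star convergence of a net `(a i)` of `X` (canonically embedded in `X**`)
to an element `F` of the bidual `X**`. -/
def WStarTendsto {ι : Type*} (a : ι → X) (l : Filter ι) (F : Dual ℂ (Dual ℂ X)) : Prop :=
  ∀ x' : Dual ℂ X, Tendsto (fun i => x' (a i)) l (𝓝 (F x'))

end Bilinear

section Algebra

variable (A : Type*) [NonUnitalNormedRing A] [NormedSpace ℂ A]
  [IsScalarTower ℂ A A] [SMulCommClass ℂ A A]

/-- The multiplication of a (non-unital) Banach algebra as a bounded bilinear map. -/
abbrev mulCLM : A →L[ℂ] A →L[ℂ] A := ContinuousLinearMap.mul ℂ A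

/-- The first Arens product on the bidual `A**`. -/
def fstArens (F G : Dual ℂ (Dual ℂ A)) : Dual ℂ (Dual ℂ A) := ext3 (mulCLM A) F G

/-- The second Arens product on the bidual `A**` (`m^{t***t}`). -/
def sndArens (F G : Dual ℂ (Dual ℂ A)) : Dual ℂ (Dual ℂ A) :=
  ext3 ((mulCLM A).flip) G F

/-- A Banach algebra is Arens regular when its two Arens products coincide. -/
def ArensRegular : Prop := ∀ F G : Dual ℂ (Dual ℂ A), fstArens A F G = sndArens A F G

end Algebra

section ModuleWC

universe u
variable {A : Type u} {B : Type*} [NonUnitalNormedRing A] [NormedSpace ℂ A]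
  [NormedAddCommGroup B] [NormedSpace ℂ B]

/-- For a left Banach `A`-module action `πl` on `B`, the element `b' a ∈ B*`,
`⟨b' a, b⟩ = ⟨b', a • b⟩`. -/
def dualSmulL (πl : A →L[ℂ] B →L[ℂ] B) (b' : Dual ℂ B) (a : A) : Dual ℂ B := adj πl b' a

/-- The Arens extension `b' a'' ∈ B***`, `⟨b'', b' a''⟩ = ⟨π_ℓ***(a'', b''), b'⟩`. -/
def dualSmulLStar (πl : A →L[ℂ] B →L[ℂ] B) (b' : Dual ℂ B) (F : Dual ℂ (Dual ℂ A)) :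
    Dual ℂ (Dual ℂ (Dual ℂ B)) :=
  (inclusionInDoubleDual ℂ (Dual ℂ B) b').comp (ext3 πl F)

/-- `b' ∈ B*` has the left-weak*-weak convergence property (`Lw*wc`) with respect to `A`:
for every net `(a_α) ⊆ A` with `a_α → a''` weak* in `A**`, the net `b' a_α` converges
weakly to `b' a''` in `B*`. -/
def LWStarWC (πl : A →L[ℂ] B →L[ℂ] B) (b' : Dual ℂ B) : Prop :=
  ∀ (ι : Type u) (l : Filter ι) (a : ι → A) (F : Dual ℂ (Dual ℂ A)),
    WStarTendsto a l F →
    ∀ b'' : Dual ℂ (Dual ℂ B),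
      Tendsto (fun i => b'' (dualSmulL πl b' (a i))) l (𝓝 (dualSmulLStar πl b' F b''))

/-- For a right Banach `A`-module action `πr` on `B`, the element `a b' ∈ B*`,
`⟨a b', b⟩ = ⟨b', b • a⟩`. -/
def dualSmulR (πr : B →L[ℂ] A →L[ℂ] B) (a : A) (b' : Dual ℂ B) : Dual ℂ B :=
  adj πr.flip b' a

/-- The Arens extension `a'' b' ∈ B***`, `⟨b'', a'' b'⟩ = ⟨π_r^{t***}(a'', b''), b'⟩`. -/
def dualSmulRStar (πr : B →L[ℂ] A →L[ℂ] B) (F : Dual ℂ (Dual ℂ A)) (b' : Dual ℂ B) :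
    Dual ℂ (Dual ℂ (Dual ℂ B)) :=
  (inclusionInDoubleDual ℂ (Dual ℂ B) b').comp (ext3 πr.flip F)

/-- `b' ∈ B*` has the right-weak*-weak convergence property (`Rw*wc`) with respect to `A`. -/
def RWStarWC (πr : B →L[ℂ] A →L[ℂ] B) (b' : Dual ℂ B) : Prop :=
  ∀ (ι : Type u) (l : Filter ι) (a : ι → A) (F : Dual ℂ (Dual ℂ A)),
    WStarTendsto a l F →
    ∀ b'' : Dual ℂ (Dual ℂ B),
      Tendsto (fun i => b'' (dualSmulR πr (a i) b')) l (𝓝 (dualSmulRStar πr F b' b''))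

end ModuleWC

section AlgebraWC

variable (A : Type u) [NonUnitalNormedRing A] [NormedSpace ℂ A]
  [IsScalarTower ℂ A A] [SMulCommClass ℂ A A]

/-- The product `a'' a' ∈ A*` (first step of the first Arens product):
`⟨a'' a', a⟩ = ⟨a'', a' a⟩` where `⟨a' a, b⟩ = ⟨a', a b⟩`. -/
def biSmul (F : Dual ℂ (Dual ℂ A)) (a' : Dual ℂ A) : Dual ℂ A :=
  F.comp (adj (mulCLM A) a')

/-- The element `a · a' ∈ A*`, `⟨a a', b⟩ = ⟨a', b a⟩`. -/
def leftMulDual (a : A) (a' : Dual ℂ A) : Dual ℂ A := a'.comp ((mulCLM A).flip a)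

/-- `A*` has the `Rw*wc`-property with respect to `A`: for every `a' ∈ A*` and every net
`(a_α) ⊆ A` with `a_α → a''` weak* in `A**`, the net `a_α a'` (`⟨a_α a', b⟩ = ⟨a', b a_α⟩`)
converges weakly in `A*` to `a'' a'`. -/
def RWStarWCDualProp : Prop :=
  ∀ (a' : Dual ℂ A) (ι : Type u) (l : Filter ι) (a : ι → A) (F : Dual ℂ (Dual ℂ A)),
    WStarTendsto a l F →
    ∀ x'' : Dual ℂ (Dual ℂ A),
      Tendsto (fun i => x'' (leftMulDual A (a i) a')) l (𝓝 (x'' (biSmul A F a')))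

/-- `A*` has the `Lw*wc`-property with respect to `A`. -/
def LWStarWCDualProp : Prop := ∀ a' : Dual ℂ A, LWStarWC (mulCLM A) a'

/-- `A**` has the `Lw*wc`-property with respect to `A`: for every `x'' ∈ A**` and every net
`(a_α) ⊆ A` with `a_α → a''` weak* in `A**`, the net `x'' a_α` converges weakly in `A**`
to `x'' a''`. -/
def LWStarWCBidualProp : Prop :=
  ∀ (x'' : Dual ℂ (Dual ℂ A)) (ι : Type u) (l : Filter ι) (a : ι → A) (F : Dual ℂ (Dual ℂ A)),
    WStarTendsto a l F →
    ∀ Φ : Dual ℂ (Dual ℂ (Dual ℂ A)),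
      Tendsto (fun i => Φ (fstArens A x'' (inclusionInDoubleDual ℂ A (a i)))) l
        (𝓝 (Φ (fstArens A x'' F)))

/-- `D : A → A*` is a derivation: `D(ab) = a·D(b) + D(a)·b`, where
`(a·f)(x) = f(x a)` and `(f·b)(x) = f(b x)`. -/
def IsDerivation (D : A →L[ℂ] Dual ℂ A) : Prop :=
  ∀ a b : A, D (a * b) = (D b).comp ((mulCLM A).flip a) + (D a).comp (mulCLM A b)

/-- `A` is weakly amenable: every bounded derivation `D : A → A*` is inner. -/
def WeaklyAmenable : Prop :=
  ∀ D : A →L[ℂ] Dual ℂ A, IsDerivation A D →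
    ∃ f : Dual ℂ A, ∀ a : A, D a = f.comp ((mulCLM A).flip a) - f.comp (mulCLM A a)

/-- The left action of `A**` (with the first Arens product) on `A***`:
`(F·Φ)(G) = Φ(G F)`. -/
def ddLeftAct (F : Dual ℂ (Dual ℂ A)) (Φ : Dual ℂ (Dual ℂ (Dual ℂ A))) :
    Dual ℂ (Dual ℂ (Dual ℂ A)) :=
  Φ.comp ((ext3 (mulCLM A)).flip F)

/-- The right action of `A**` (with the first Arens product) on `A***`:
`(Φ·F)(G) = Φ(F G)`. -/
def ddRightAct (F : Dual ℂ (Dual ℂ A)) (Φ : Dual ℂ (Dual ℂ (Dual ℂ A))) :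
    Dual ℂ (Dual ℂ (Dual ℂ A)) :=
  Φ.comp (ext3 (mulCLM A) F)

/-- A bounded map `D : A** → A***` is a derivation for the first Arens product. -/
def IsDerivationDD (D : Dual ℂ (Dual ℂ A) →L[ℂ] Dual ℂ (Dual ℂ (Dual ℂ A))) : Prop :=
  ∀ F G : Dual ℂ (Dual ℂ A),
    D (fstArens A F G) = ddLeftAct A F (D G) + ddRightAct A G (D F)

/-- `A**` (with the first Arens product) is weakly amenable. -/
def WeaklyAmenableDD : Prop :=
  ∀ D : Dual ℂ (Dual ℂ A) →L[ℂ] Dual ℂ (Dual ℂ (Dual ℂ A)), IsDerivationDD A D →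
    ∃ Φ : Dual ℂ (Dual ℂ (Dual ℂ A)), ∀ F, D F = ddLeftAct A F Φ - ddRightAct A F Φ

/-- `A*** A** ⊆ A*`: each product `x''' x''` (`⟨x''' x'', a''⟩ = ⟨x''', x'' a''⟩`)
lies in the canonical image of `A*` in `A***`. -/
def TripleDualMulIntoDual : Prop :=
  ∀ (Φ : Dual ℂ (Dual ℂ (Dual ℂ A))) (F : Dual ℂ (Dual ℂ A)),
    ∃ a' : Dual ℂ A, ddRightAct A F Φ = inclusionInDoubleDual ℂ (Dual ℂ A) a'

end AlgebraWC

section DualMap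

variable {X Y : Type*} [NormedAddCommGroup X] [NormedSpace ℂ X]
  [NormedAddCommGroup Y] [NormedSpace ℂ Y]

/-- The Banach-space adjoint of a bounded operator. -/
def dualMap' (T : X →L[ℂ] Y) : Dual ℂ Y →L[ℂ] Dual ℂ X :=
  (ContinuousLinearMap.compL ℂ X Y ℂ).flip T

/-- The second adjoint `D'' : A** → A***` of `D : A → A*`. -/
def secondAdjoint {A : Type*} [NonUnitalNormedRing A] [NormedSpace ℂ A]
    (D : A →L[ℂ] Dual ℂ A) :
    Dual ℂ (Dual ℂ A) →L[ℂ] Dual ℂ (Dual ℂ (Dual ℂ A)) :=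
  dualMap' (dualMap' D)

end DualMap

section Biregular

variable (A B : Type*) [NonUnitalNormedRing A] [NormedSpace ℂ A]
  [NonUnitalNormedRing B] [NormedSpace ℂ B]

/-- A bounded bilinear form `m : A × B → ℂ` is biregular (Ülger): for any sequences
`(a_i), (aa2_j)` in the unit ball of `A` and `(b_i), (bb_j)` in the unit ball of `B`,
the two iterated limits of `m(a_i aa2_j, b_i bb_j)` coincide whenever both exist. -/
def Biregular (m : A →L[ℂ] B →L[ℂ] ℂ) : Prop :=
  ∀ (a aa2 : ℕ → A) (b bb : ℕ → B),
    (∀ i, ‖a i‖ ≤ 1) → (∀ j, ‖aa2 j‖ ≤ 1) → (∀ i, ‖b i‖ ≤ 1) → (∀ j, ‖bb j‖ ≤ 1) →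
    ∀ (g h : ℕ → ℂ) (L L' : ℂ),
      (∀ i, Tendsto (fun j => m (a i * aa2 j) (b i * bb j)) atTop (𝓝 (g i))) →
      Tendsto g atTop (𝓝 L) →
      (∀ j, Tendsto (fun i => m (a i * aa2 j) (b i * bb j)) atTop (𝓝 (h j))) →
      Tendsto h atTop (𝓝 L') → L = L'

/-- Arens regularity of the projective tensor product `A ⊗̂ B`.  By Ülger's theorem
(`[22, Theorem 3.4]`), `A ⊗̂ B` is Arens regular if and only if every bounded bilinear
form `m : A × B → ℂ` is biregular; since the dual of `A ⊗̂ B` is exactly the space of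
bounded bilinear forms on `A × B`, we take this equivalent characterization as the
formalization of Arens regularity of `A ⊗̂ B`. -/
def ProjArensRegular : Prop := ∀ m : A →L[ℂ] B →L[ℂ] ℂ, Biregular A B m

end Biregular

end Arens

namespace ArensAux

open Arens ContinuousLinearMap NormedSpace Filter Topology

variable {A : Type*} [NonUnitalNormedRing A] [NormedSpace ℂ A]
  [IsScalarTower ℂ A A] [SMulCommClass ℂ A A]

/-- The auxiliary functional `a ↦ G (b ↦ H (c ↦ D b (c * a)))`. -/
def Uaux (D : A →L[ℂ] Dual ℂ A) (G H : Dual ℂ (Dual ℂ A)) : Dual ℂ A :=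
  G.comp ((dualMap' D).comp
    (((ContinuousLinearMap.compL ℂ (Dual ℂ A) (Dual ℂ A) ℂ) H).comp
      (adj ((mulCLM A).flip)).flip))

lemma Uaux_apply (D : A →L[ℂ] Dual ℂ A) (G H : Dual ℂ (Dual ℂ A)) (a : A) :
    Uaux D G H a = G (dualMap' D (H.comp ((adj ((mulCLM A).flip)).flip a))) := rfl

/-- Splitting coming from the derivation property of `D`. -/
lemma key1 (D : A →L[ℂ] Dual ℂ A) (hD : Arens.IsDerivation A D)
    (F G H : Dual ℂ (Dual ℂ A)) :
    ext3 (mulCLM A) F G (dualMap' D H)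
      = F (Uaux D G H) + F (dualMap' D (ext3 (mulCLM A) G H)) := by
  have hsplit : adj (adj (mulCLM A)) G (dualMap' D H)
      = Uaux D G H + dualMap' D (ext3 (mulCLM A) G H) := by
    ext a
    have hinner : adj (mulCLM A) (dualMap' D H) a
        = dualMap' D (H.comp ((adj ((mulCLM A).flip)).flip a))
          + adj (adj (mulCLM A)) H (D a) := by
      ext b
      have : D (a * b) = (D b).comp ((mulCLM A).flip a) + (D a).comp (mulCLM A b) := hD a b
      show H (D (a * b)) = _
      rw [this, map_add]
      rfl
    show G (adj (mulCLM A) (dualMap' D H) a) = _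
    rw [hinner, map_add]
    rfl
  show F (adj (adj (mulCLM A)) G (dualMap' D H)) = _
  rw [hsplit, map_add]

/-- The key consequence of `D''` being a derivation. -/
lemma key2 (D : A →L[ℂ] Dual ℂ A) (hD : Arens.IsDerivation A D)
    (hD'' : Arens.IsDerivationDD A (Arens.secondAdjoint D))
    (F G H : Dual ℂ (Dual ℂ A)) :
    F (Uaux D G H) = G (dualMap' D (ext3 (mulCLM A) H F)) := by
  have h := congrArg (fun Φ => Φ H) (hD'' F G)
  simp only [ContinuousLinearMap.add_apply] at h
  have hl : Arens.secondAdjoint D (Arens.fstArens A F G) H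
      = ext3 (mulCLM A) F G (dualMap' D H) := rfl
  have h2 : Arens.ddLeftAct A F (Arens.secondAdjoint D G) H
      = G (dualMap' D (ext3 (mulCLM A) H F)) := rfl
  have h3 : Arens.ddRightAct A G (Arens.secondAdjoint D F) H
      = F (dualMap' D (ext3 (mulCLM A) G H)) := rfl
  rw [hl, key1 D hD F G H, h2, h3] at h
  exact add_right_cancel h

end ArensAux

namespace ArensAux2

open Arens ContinuousLinearMap NormedSpace Filter Topology

variable {A : Type*} [NonUnitalNormedRing A] [NormedSpace ℂ A] [CompleteSpace A]

lemma secondAdjoint_surjective (D : A →L[ℂ] Dual ℂ A)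
    (hsurj : Function.Surjective D) :
    Function.Surjective (Arens.secondAdjoint D) := by
  obtain ⟨C, hC0, hC⟩ := D.exists_preimage_norm_le hsurj
  set D' : Dual ℂ (Dual ℂ A) →L[ℂ] Dual ℂ A := dualMap' D with hD'def
  have hbound : ∀ G : Dual ℂ (Dual ℂ A), ‖G‖ ≤ C * ‖D' G‖ := by
    intro G
    refine G.opNorm_le_bound (by positivity) ?_
    intro x'
    obtain ⟨x, hx, hxn⟩ := hC x'
    have h1 : G x' = (D' G) x := by rw [← hx]; rfl
    calc ‖G x'‖ = ‖(D' G) x‖ := by rw [h1]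
      _ ≤ ‖D' G‖ * ‖x‖ := (D' G).le_opNorm x
      _ ≤ ‖D' G‖ * (C * ‖x'‖) := by
          exact mul_le_mul_of_nonneg_left hxn (norm_nonneg _)
      _ = C * ‖D' G‖ * ‖x'‖ := by ring
  have hinj : Function.Injective (D' : Dual ℂ (Dual ℂ A) →ₗ[ℂ] Dual ℂ A) := by
    intro G₁ G₂ h
    have h' : D' G₁ = D' G₂ := h
    have hD0 : D' (G₁ - G₂) = 0 := by rw [map_sub, h', sub_self]
    have h0 : ‖G₁ - G₂‖ ≤ 0 := by
      have := hbound (G₁ - G₂)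
      rwa [hD0, norm_zero, mul_zero] at this
    exact sub_eq_zero.mp (norm_le_zero_iff.mp h0)
  intro Φ
  set p : Subspace ℂ (Dual ℂ A) :=
    LinearMap.range (D' : Dual ℂ (Dual ℂ A) →ₗ[ℂ] Dual ℂ A) with hpdef
  let e : Dual ℂ (Dual ℂ A) ≃ₗ[ℂ] p :=
    LinearEquiv.ofInjective (D' : Dual ℂ (Dual ℂ A) →ₗ[ℂ] Dual ℂ A) hinj
  have hDe : ∀ y : p, D' (e.symm y) = (y : Dual ℂ A) := by
    intro y
    have : (e (e.symm y) : Dual ℂ A) = D' (e.symm y) :=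
      LinearEquiv.ofInjective_apply _ _
    rw [e.apply_symm_apply] at this
    exact this.symm
  let f : p →ₗ[ℂ] ℂ := Φ.toLinearMap.comp e.symm.toLinearMap
  have hfb : ∀ y : p, ‖f y‖ ≤ (‖Φ‖ * C) * ‖y‖ := by
    intro y
    have h1 : ‖e.symm y‖ ≤ C * ‖(y : Dual ℂ A)‖ := by
      have := hbound (e.symm y)
      rwa [hDe y] at this
    calc ‖f y‖ = ‖Φ (e.symm y)‖ := rfl
      _ ≤ ‖Φ‖ * ‖e.symm y‖ := Φ.le_opNorm _
      _ ≤ ‖Φ‖ * (C * ‖(y : Dual ℂ A)‖) :=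
          mul_le_mul_of_nonneg_left h1 (norm_nonneg _)
      _ = (‖Φ‖ * C) * ‖(y : Dual ℂ A)‖ := by ring
  let fc : p →L[ℂ] ℂ := ⟨f, AddMonoidHomClass.continuous_of_bound f _ hfb⟩
  obtain ⟨g, hg, -⟩ := exists_extension_norm_eq p fc
  refine ⟨g, ?_⟩
  ext G
  have hmem : D' G ∈ p := ⟨G, rfl⟩
  have h1 : Arens.secondAdjoint D g G = g (D' G) := rfl
  have h2 : g (D' G) = fc ⟨D' G, hmem⟩ := hg ⟨D' G, hmem⟩
  have h3 : (⟨D' G, hmem⟩ : p) = e G := by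
    apply Subtype.ext
    exact (LinearEquiv.ofInjective_apply _ _).symm
  rw [h1, h2, h3]
  show Φ (e.symm (e G)) = Φ G
  rw [e.symm_apply_apply]

end ArensAux2

/-- **Theorem 3-5 (1).** If `D : A → A*` is a surjective bounded derivation whose second
adjoint `D'' : A** → A***` is a derivation, then `A*** A** ⊆ A*`, and consequently `A*`
has the weak*-weak convergence property with respect to `A`: for every `x' ∈ A*` and every
net `(a_α) ⊆ A` converging weak* to `a'' ∈ A**`, the nets `x' a_α` and `a_α x'` converge
weakly in `A*` to `x' a''` and `a'' x'` respectively. -/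
theorem tripleDualMulIntoDual_of_surjective_derivation
    {A : Type*} [NonUnitalNormedRing A] [NormedSpace ℂ A]
    [IsScalarTower ℂ A A] [SMulCommClass ℂ A A] [CompleteSpace A]
    (D : A →L[ℂ] Dual ℂ A) (hD : Arens.IsDerivation A D)
    (hsurj : Function.Surjective D)
    (hD'' : Arens.IsDerivationDD A (Arens.secondAdjoint D)) :
    Arens.TripleDualMulIntoDual A ∧
      Arens.LWStarWCDualProp A ∧ Arens.RWStarWCDualProp A := by
  have trip : Arens.TripleDualMulIntoDual A := by
    intro Φ F
    obtain ⟨P, hP⟩ := ArensAux2.secondAdjoint_surjective D hsurj Φ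
    refine ⟨ArensAux.Uaux D P F, ?_⟩
    ext G
    rw [← hP]
    exact (ArensAux.key2 D hD hD'' G P F).symm
  refine ⟨trip, ?_, ?_⟩
  · -- Lw*wc, holds for purely formal reasons
    intro a' ι l a F hF b''
    have e2' : Arens.adj (Arens.adj (Arens.mulCLM A)) b'' a'
        = b''.comp (Arens.adj (Arens.mulCLM A) a') := by ext c; rfl
    have e2 : Arens.dualSmulLStar (Arens.mulCLM A) a' F b''
        = F (b''.comp (Arens.adj (Arens.mulCLM A) a')) := by
      show F (Arens.adj (Arens.adj (Arens.mulCLM A)) b'' a') = _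
      rw [e2']
    rw [e2]
    exact hF (b''.comp (Arens.adj (Arens.mulCLM A) a'))
  · -- Rw*wc, from A*** A** ⊆ A*
    intro a' ι l a F hF x''
    obtain ⟨z', hz⟩ := trip (inclusionInDoubleDual ℂ (Dual ℂ A) a') x''
    have hzz : ∀ G : Dual ℂ (Dual ℂ A),
        x'' (Arens.adj (Arens.adj (Arens.mulCLM A)) G a') = G z' :=
      fun G => ContinuousLinearMap.ext_iff.mp hz G
    have e1 : ∀ i, x'' (Arens.leftMulDual A (a i) a') = z' (a i) := by
      intro i
      have ha : Arens.leftMulDual A (a i) a'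
          = Arens.adj (Arens.adj (Arens.mulCLM A)) (inclusionInDoubleDual ℂ A (a i)) a' := by
        ext c; rfl
      rw [ha]
      exact hzz (inclusionInDoubleDual ℂ A (a i))
    have e2 : x'' (Arens.biSmul A F a') = F z' := by
      have hb : Arens.biSmul A F a' = Arens.adj (Arens.adj (Arens.mulCLM A)) F a' := by
        ext c; rfl
      rw [hb]
      exact hzz F
    rw [e2]
    exact (hF z').congr fun i => (e1 i).symm
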